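/- For the Weyl group W of type C_r, identified with the semidirect product {±1}^r ⋊ S_r, let w_μ = (μ, σ_μ) where for μ ∈ {±1}^r the permutation σ_μ ∈ S_r is defined by σ_μ^{-1}(i) = #{1≤k≤i | μ_k = 1} if μ_i = 1, and σ_μ^{-1}(i) = r+1-#{1≤k≤i | μ_k = -1} if μ_i = -1. Then the length of w_μ (with respect to the Coxeter structure of the C_r Weyl group) equals Σ_{i=1}^r (r-i+1)·[μ_i = -1]. -/

import Mathlib

/-- The standard basis vector `ε_i` in `ℤ^r`. -/
def eps (r : ℕ) (i : Fin r) : Fin r → ℤ := fun j => if j = i then 1 else 0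

/-- Positive roots of type `C_r`: `ε_i - ε_j`, `ε_i + ε_j` (`i < j`), and `2ε_i`. -/
def posRootsC (r : ℕ) : Set (Fin r → ℤ) :=
  {v | (∃ i j : Fin r, i < j ∧ (v = eps r i - eps r j ∨ v = eps r i + eps r j)) ∨
       (∃ i : Fin r, v = 2 • eps r i)}

/-- The signed permutation `(μ, σ)` acting on `ℤ^r`, sending `ε_j ↦ μ_{σ(j)} ε_{σ(j)}`. -/
def sact {r : ℕ} (μ : Fin r → ℤ) (σ : Equiv.Perm (Fin r)) (v : Fin r → ℤ) : Fin r → ℤ :=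
  fun i => μ i * v (σ.symm i)

/-- Coxeter length via the inversion formula `l(w) = #{α ∈ Δ⁺ : w(α) ∈ -Δ⁺}`. -/
noncomputable def lenC {r : ℕ} (μ : Fin r → ℤ) (σ : Equiv.Perm (Fin r)) : ℕ :=
  Set.ncard {α | α ∈ posRootsC r ∧ -(sact μ σ α) ∈ posRootsC r}

namespace CAux
variable {r : ℕ}

lemma eps_nonneg (i x : Fin r) : 0 ≤ eps r i x := by
  simp only [eps]; split <;> norm_num

lemma exists_pos {v : Fin r → ℤ} (hv : v ∈ posRootsC r) : ∃ x, 0 < v x := by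
  rcases hv with ⟨i, j, hij, h | h⟩ | ⟨i, h⟩
  · exact ⟨i, by simp [h, eps, Pi.sub_apply, hij.ne, hij.ne']⟩
  · exact ⟨i, by simp [h, eps, Pi.add_apply]; positivity⟩
  · exact ⟨i, by simp [h, eps]⟩

lemma not_mem_neg {v : Fin r → ℤ} (hv : ∀ x, 0 ≤ v x) : -v ∉ posRootsC r := by
  intro h
  obtain ⟨x, hx⟩ := exists_pos h
  have := hv x
  simp only [Pi.neg_apply] at hx
  omega

lemma mem_add {a b : Fin r} (h : a ≠ b) : eps r a + eps r b ∈ posRootsC r := by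
  rcases lt_or_gt_of_ne h with h' | h'
  · exact Or.inl ⟨a, b, h', Or.inr rfl⟩
  · exact Or.inl ⟨b, a, h', Or.inr (add_comm _ _)⟩

lemma mem_two (a : Fin r) : (2 • eps r a : Fin r → ℤ) ∈ posRootsC r := Or.inr ⟨a, rfl⟩

lemma mem_sub_iff {a b : Fin r} (h : a ≠ b) :
    (eps r a - eps r b ∈ posRootsC r) ↔ a < b := by
  constructor
  · rintro (⟨i, j, hij, he | he⟩ | ⟨i, he⟩)
    · have ha := congrFun he a
      have hb := congrFun he b
      simp only [eps, Pi.sub_apply] at ha hb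
      split_ifs at ha hb <;> subst_vars <;> first | omega | exact hij | simp_all
    · have hb := congrFun he b
      simp only [eps, Pi.sub_apply, Pi.add_apply] at hb
      split_ifs at hb <;> simp_all <;> omega
    · have hi := congrFun he i
      simp only [eps, Pi.sub_apply, Pi.smul_apply, if_pos rfl, smul_ite, smul_zero] at hi
      norm_num at hi
      split_ifs at hi <;> omega
  · intro h'
    exact Or.inl ⟨a, b, h', Or.inl rfl⟩


lemma sact_eps (μ : Fin r → ℤ) (σ : Equiv.Perm (Fin r)) (i : Fin r) :
    sact μ σ (eps r i) = μ (σ i) • eps r i ∘ σ.symm := by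
  funext x
  simp only [sact, Pi.smul_apply, Function.comp_apply, smul_eq_mul, eps]
  by_cases h : σ.symm x = i
  · have : x = σ i := by rw [← h, Equiv.apply_symm_apply]
    subst this
    simp [h]
  · simp [h]

lemma eps_comp (σ : Equiv.Perm (Fin r)) (i : Fin r) :
    eps r i ∘ σ.symm = eps r (σ i) := by
  funext x
  simp only [Function.comp_apply, eps]
  by_cases h : x = σ i
  · subst h; simp
  · rw [if_neg, if_neg h]
    intro hc
    exact h (by rw [← hc, Equiv.apply_symm_apply])

lemma sact_eps' (μ : Fin r → ℤ) (σ : Equiv.Perm (Fin r)) (i : Fin r) :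
    sact μ σ (eps r i) = μ (σ i) • eps r (σ i) := by
  rw [sact_eps, eps_comp]

lemma sact_add (μ : Fin r → ℤ) (σ : Equiv.Perm (Fin r)) (u v : Fin r → ℤ) :
    sact μ σ (u + v) = sact μ σ u + sact μ σ v := by
  funext x; simp [sact, mul_add]

lemma sact_sub (μ : Fin r → ℤ) (σ : Equiv.Perm (Fin r)) (u v : Fin r → ℤ) :
    sact μ σ (u - v) = sact μ σ u - sact μ σ v := by
  funext x; simp [sact, mul_sub]

lemma sact_nsmul (μ : Fin r → ℤ) (σ : Equiv.Perm (Fin r)) (n : ℕ) (v : Fin r → ℤ) :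
    sact μ σ (n • v) = n • sact μ σ v := by
  funext x
  simp only [sact, Pi.smul_apply, nsmul_eq_mul]
  ring

lemma inj_two : Function.Injective (fun j : Fin r => (2 • eps r j : Fin r → ℤ)) := by
  intro a b h
  have := congrFun h a
  simp only [Pi.smul_apply, eps, if_pos rfl, smul_ite, smul_zero] at this
  norm_num at this
  exact this

lemma pair_cover {i j i' j' x : Fin r} (hij : i ≠ j)
    (h : eps r i + eps r j = eps r i' + eps r j') (hx : x = i ∨ x = j) :
    x = i' ∨ x = j' := by
  have hx' := congrFun h x
  simp only [eps, Pi.add_apply] at hx'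
  rcases hx with rfl | rfl <;>
    split_ifs at hx' <;> first | (left; assumption) | (right; assumption) | omega

lemma inj_pair {i j i' j' : Fin r} (hij : i < j) (hij' : i' < j')
    (h : eps r i + eps r j = eps r i' + eps r j') : i = i' ∧ j = j' := by
  have h1 := pair_cover hij.ne h (Or.inl rfl)
  have h2 := pair_cover hij.ne h (Or.inr rfl)
  rcases h1 with h1 | h1
  · refine ⟨h1, ?_⟩
    rcases h2 with h2 | h2
    · exact absurd (h1 ▸ h2 ▸ hij) (lt_irrefl _)
    · exact h2
  · exfalso
    rcases h2 with h2 | h2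
    · exact absurd (hij.trans (h2 ▸ (h1 ▸ hij'))) (lt_irrefl _)
    · exact absurd (h1 ▸ h2 ▸ hij) (lt_irrefl _)

lemma two_ne_pair {a i j : Fin r} (hij : i < j) :
    (2 • eps r a : Fin r → ℤ) ≠ eps r i + eps r j := by
  intro h
  have := congrFun h a
  simp only [Pi.smul_apply, eps, Pi.add_apply, if_pos rfl, smul_ite, smul_zero] at this
  norm_num at this
  split_ifs at this <;> omega

lemma card_val_filter (r : ℕ) (P : ℕ → Prop) [DecidablePred P] :
    (Finset.univ.filter fun j : Fin r => P (j : ℕ)).card = ((Finset.range r).filter P).card := by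
  rw [← Finset.card_image_of_injective _ Fin.val_injective]
  congr 1
  ext x
  simp only [Finset.mem_image, Finset.mem_filter, Finset.mem_range, Finset.mem_univ, true_and]
  constructor
  · rintro ⟨a, h, rfl⟩; exact ⟨a.isLt, h⟩
  · rintro ⟨hx, h⟩; exact ⟨⟨x, hx⟩, h, rfl⟩

lemma card_ge_filter (p : ℕ) (hp : p ≤ r) :
    (Finset.univ.filter fun j : Fin r => p ≤ (j : ℕ)).card = r - p := by
  rw [card_val_filter]
  have : (Finset.range r).filter (fun x => p ≤ x) = Finset.Ico p r := by
    ext x; simp [Finset.mem_range, Finset.mem_Ico]; omega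
  rw [this, Nat.card_Ico]

lemma card_gt_filter (a : Fin r) :
    (Finset.univ.filter fun b : Fin r => a < b).card = r - 1 - (a : ℕ) := by
  have : (Finset.univ.filter fun b : Fin r => a < b)
      = Finset.univ.filter fun b : Fin r => (a : ℕ) < (b : ℕ) := by
    congr 1
  rw [this, card_val_filter]
  have : (Finset.range r).filter (fun x => (a : ℕ) < x) = Finset.Ioo (a : ℕ) r := by
    ext x; simp [Finset.mem_range, Finset.mem_Ioo]; omega
  rw [this, Nat.card_Ioo]; omega

lemma card_pair_filter {α : Type*} [Fintype α] [DecidableEq α]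
    (P : α × α → Prop) [DecidablePred P] :
    (Finset.univ.filter P).card = ∑ a : α, (Finset.univ.filter fun b => P (a, b)).card := by
  rw [Finset.card_eq_sum_card_fiberwise (f := Prod.fst) (t := Finset.univ)
    (fun x _ => Finset.mem_univ _)]
  refine Finset.sum_congr rfl fun a _ => ?_
  rw [← Finset.card_image_of_injective (Finset.univ.filter fun b => P (a, b))
    (f := fun b => (a, b)) (fun x y hxy => by simpa using hxy)]
  congr 1
  ext ⟨x, y⟩
  simp only [Finset.mem_filter, Finset.mem_image, Finset.mem_univ, true_and, Prod.mk.injEq]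
  constructor
  · rintro ⟨h1, rfl⟩; exact ⟨y, h1, rfl, rfl⟩
  · rintro ⟨b, h1, rfl, rfl⟩; exact ⟨h1, rfl⟩

section Main
variable {r : ℕ} (μ : Fin r → ℤ) (σ : Equiv.Perm (Fin r))

/-- number of positive entries -/
def pP : ℕ := (Finset.univ.filter fun i : Fin r => μ i = 1).card
/-- number of negative entries -/
def mM : ℕ := (Finset.univ.filter fun i : Fin r => μ i = -1).card

variable {μ σ}

lemma hpm (hμ : ∀ i, μ i = 1 ∨ μ i = -1) : pP μ + mM μ = r := by
  have h := Finset.card_filter_add_card_filter_not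
    (s := (Finset.univ : Finset (Fin r))) (p := fun i => μ i = 1)
  have h2 : Finset.univ.filter (fun i : Fin r => ¬ μ i = 1)
      = Finset.univ.filter (fun i : Fin r => μ i = -1) := by
    apply Finset.filter_congr
    intro i _
    rcases hμ i with h' | h' <;> simp [h']
  rw [h2] at h
  simpa [pP, mM, Finset.card_univ] using h

lemma hmr : mM μ ≤ r := by
  simpa [mM, Finset.card_univ] using
    Finset.card_le_card (Finset.filter_subset _ (Finset.univ : Finset (Fin r)))

section G
variable (hμ : ∀ i, μ i = 1 ∨ μ i = -1)
  (hσ : ∀ i : Fin r,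
      (μ i = 1 → (σ.symm i : ℕ) + 1 =
        (Finset.univ.filter (fun k : Fin r => k ≤ i ∧ μ k = 1)).card) ∧
      (μ i = -1 → (σ.symm i : ℕ) + 1 =
        r + 1 - (Finset.univ.filter (fun k : Fin r => k ≤ i ∧ μ k = -1)).card))
include hσ

lemma G1 {i : Fin r} (hi : μ i = 1) : (σ.symm i : ℕ) < pP μ := by
  have h := (hσ i).1 hi
  have hle : (Finset.univ.filter (fun k : Fin r => k ≤ i ∧ μ k = 1)).card ≤ pP μ :=
    Finset.card_le_card (Finset.monotone_filter_right _ (fun k _ hk => hk.2))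
  omega

include hμ

lemma G2 {i : Fin r} (hi : μ i = -1) : pP μ ≤ (σ.symm i : ℕ) := by
  have h := (hσ i).2 hi
  have hc1 : 0 < (Finset.univ.filter (fun k : Fin r => k ≤ i ∧ μ k = -1)).card :=
    Finset.card_pos.mpr ⟨i, by simp [hi]⟩
  have hle : (Finset.univ.filter (fun k : Fin r => k ≤ i ∧ μ k = -1)).card ≤ mM μ :=
    Finset.card_le_card (Finset.monotone_filter_right _ (fun k _ hk => hk.2))
  have := hpm hμ
  have := hmr (μ := μ) (r := r)
  omega

omit hμ

lemma G3 {i i' : Fin r} (hi : μ i = 1) (hi' : μ i' = 1) (hlt : i < i') :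
    σ.symm i < σ.symm i' := by
  have h := (hσ i).1 hi
  have h' := (hσ i').1 hi'
  have hss : (Finset.univ.filter (fun k : Fin r => k ≤ i ∧ μ k = 1))
      ⊂ (Finset.univ.filter (fun k : Fin r => k ≤ i' ∧ μ k = 1)) := by
    rw [Finset.ssubset_iff_of_subset
      (Finset.monotone_filter_right _ (fun k _ hk => ⟨hk.1.trans hlt.le, hk.2⟩))]
    exact ⟨i', by simp [hi'], by simp [hlt.not_ge]⟩
  have := Finset.card_lt_card hss
  exact Fin.lt_def.mpr (by omega)

include hμ

lemma G4 {i i' : Fin r} (hi : μ i = -1) (hi' : μ i' = -1) (hlt : i < i') :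
    σ.symm i' < σ.symm i := by
  have h := (hσ i).2 hi
  have h' := (hσ i').2 hi'
  have hss : (Finset.univ.filter (fun k : Fin r => k ≤ i ∧ μ k = -1))
      ⊂ (Finset.univ.filter (fun k : Fin r => k ≤ i' ∧ μ k = -1)) := by
    rw [Finset.ssubset_iff_of_subset
      (Finset.monotone_filter_right _ (fun k _ hk => ⟨hk.1.trans hlt.le, hk.2⟩))]
    exact ⟨i', by simp [hi'], by simp [hlt.not_ge]⟩
  have hcard := Finset.card_lt_card hss
  have hc1 : 0 < (Finset.univ.filter (fun k : Fin r => k ≤ i ∧ μ k = -1)).card :=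
    Finset.card_pos.mpr ⟨i, by simp [hi]⟩
  have hle : (Finset.univ.filter (fun k : Fin r => k ≤ i' ∧ μ k = -1)).card ≤ mM μ :=
    Finset.card_le_card (Finset.monotone_filter_right _ (fun k _ hk => hk.2))
  have := hmr (μ := μ) (r := r)
  exact Fin.lt_def.mpr (by omega)

lemma H1 {j : Fin r} (hj : (j : ℕ) < pP μ) : μ (σ j) = 1 := by
  rcases hμ (σ j) with h | h
  · exact h
  · have := G2 hμ hσ h
    rw [Equiv.symm_apply_apply] at this
    omega

lemma H2 {j : Fin r} (hj : pP μ ≤ (j : ℕ)) : μ (σ j) = -1 := by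
  rcases hμ (σ j) with h | h
  · have := G1 hσ h
    rw [Equiv.symm_apply_apply] at this
    omega
  · exact h

lemma H3 {i j : Fin r} (hi : (i : ℕ) < pP μ) (hj : (j : ℕ) < pP μ) (hlt : i < j) :
    σ i < σ j := by
  have h1 := H1 hμ hσ hi
  have h2 := H1 hμ hσ hj
  rcases lt_trichotomy (σ i) (σ j) with h | h | h
  · exact h
  · exact absurd (σ.injective h) hlt.ne
  · have := G3 hσ h2 h1 h
    simp only [Equiv.symm_apply_apply] at this
    exact absurd (this.trans hlt) (lt_irrefl _)

lemma H4 {i j : Fin r} (hi : pP μ ≤ (i : ℕ)) (hlt : i < j) :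
    σ j < σ i := by
  have h1 := H2 hμ hσ hi
  have h2 := H2 hμ hσ (le_trans hi (le_of_lt (Fin.lt_def.mp hlt)))
  rcases lt_trichotomy (σ j) (σ i) with h | h | h
  · exact h
  · exact absurd (σ.injective h) hlt.ne'
  · have := G4 hμ hσ h1 h2 h
    simp only [Equiv.symm_apply_apply] at this
    exact absurd (this.trans hlt) (lt_irrefl _)

end G

lemma ns11 {i j : Fin r} (ha : μ (σ i) = 1) (hb : μ (σ j) = 1) :
    -(sact μ σ (eps r i - eps r j)) = eps r (σ j) - eps r (σ i) := by
  rw [sact_sub, sact_eps', sact_eps', ha, hb, one_smul, one_smul, neg_sub]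

lemma ns1m {i j : Fin r} (ha : μ (σ i) = 1) (hb : μ (σ j) = -1) :
    -(sact μ σ (eps r i - eps r j)) = -(eps r (σ i) + eps r (σ j)) := by
  rw [sact_sub, sact_eps', sact_eps', ha, hb, one_smul, neg_smul, one_smul, sub_neg_eq_add]

lemma nsmm {i j : Fin r} (ha : μ (σ i) = -1) (hb : μ (σ j) = -1) :
    -(sact μ σ (eps r i - eps r j)) = eps r (σ i) - eps r (σ j) := by
  rw [sact_sub, sact_eps', sact_eps', ha, hb, neg_smul, one_smul, neg_smul, one_smul,
    neg_sub_neg, neg_sub]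

lemma na11 {i j : Fin r} (ha : μ (σ i) = 1) (hb : μ (σ j) = 1) :
    -(sact μ σ (eps r i + eps r j)) = -(eps r (σ i) + eps r (σ j)) := by
  rw [sact_add, sact_eps', sact_eps', ha, hb, one_smul, one_smul]

lemma na1m {i j : Fin r} (ha : μ (σ i) = 1) (hb : μ (σ j) = -1) :
    -(sact μ σ (eps r i + eps r j)) = eps r (σ j) - eps r (σ i) := by
  rw [sact_add, sact_eps', sact_eps', ha, hb, one_smul, neg_smul, one_smul,
    ← sub_eq_add_neg, neg_sub]

lemma nam1 {i j : Fin r} (ha : μ (σ i) = -1) (hb : μ (σ j) = 1) :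
    -(sact μ σ (eps r i + eps r j)) = eps r (σ i) - eps r (σ j) := by
  rw [sact_add, sact_eps', sact_eps', ha, hb, neg_smul, one_smul, one_smul,
    neg_add, neg_neg, ← sub_eq_add_neg]

lemma namm {i j : Fin r} (ha : μ (σ i) = -1) (hb : μ (σ j) = -1) :
    -(sact μ σ (eps r i + eps r j)) = eps r (σ i) + eps r (σ j) := by
  rw [sact_add, sact_eps', sact_eps', ha, hb, neg_smul, one_smul, neg_smul, one_smul,
    neg_add, neg_neg, neg_neg]

lemma nt1 {i : Fin r} (ha : μ (σ i) = 1) :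
    -(sact μ σ (2 • eps r i)) = -(2 • eps r (σ i)) := by
  rw [sact_nsmul, sact_eps', ha, one_smul]

lemma ntm {i : Fin r} (ha : μ (σ i) = -1) :
    -(sact μ σ (2 • eps r i)) = 2 • eps r (σ i) := by
  rw [sact_nsmul, sact_eps', ha, neg_smul, one_smul, smul_neg, neg_neg]

lemma add_nonneg' (a b : Fin r) (x : Fin r) : 0 ≤ (eps r a + eps r b) x :=
  add_nonneg (eps_nonneg a x) (eps_nonneg b x)

lemma two_nonneg' (a : Fin r) (x : Fin r) : 0 ≤ (2 • eps r a : Fin r → ℤ) x := by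
  have := eps_nonneg a x
  simpa using nsmul_nonneg this 2

end Main
end CAux


open CAux Finset

/-- For `w_μ = (μ, σ_μ)` in the type `C_r` Weyl group `{±1}^r ⋊ S_r`, with `σ_μ` defined by
`σ_μ⁻¹(i) = #{k ≤ i : μ_k = 1}` if `μ_i = 1` and `σ_μ⁻¹(i) = r + 1 - #{k ≤ i : μ_k = -1}`
if `μ_i = -1` (1-based), the Coxeter length of `w_μ` equals `Σ_{i=1}^r (r-i+1)·[μ_i = -1]`. -/
theorem stmt0 (r : ℕ) (μ : Fin r → ℤ) (hμ : ∀ i, μ i = 1 ∨ μ i = -1)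
    (σ : Equiv.Perm (Fin r))
    (hσ : ∀ i : Fin r,
      (μ i = 1 → (σ.symm i : ℕ) + 1 =
        (Finset.univ.filter (fun k : Fin r => k ≤ i ∧ μ k = 1)).card) ∧
      (μ i = -1 → (σ.symm i : ℕ) + 1 =
        r + 1 - (Finset.univ.filter (fun k : Fin r => k ≤ i ∧ μ k = -1)).card)) :
    lenC μ σ = ∑ i : Fin r, (if μ i = -1 then r - (i : ℕ) else 0) := by
  classical
  set p := pP μ with hp
  set m := mM μ with hm
  have hpmr : p + m = r := hpm hμ
  -- the Finsets
  set F1 : Finset (Fin r) := univ.filter (fun j => p ≤ (j : ℕ)) with hF1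
  set F2 : Finset (Fin r × Fin r) := univ.filter
    (fun q => q.1 < q.2 ∧ (p ≤ (q.1 : ℕ) ∨
      ((q.1 : ℕ) < p ∧ p ≤ (q.2 : ℕ) ∧ σ q.2 < σ q.1))) with hF2
  set F : Finset (Fin r → ℤ) :=
    F1.image (fun j => 2 • eps r j) ∪ F2.image (fun q => eps r q.1 + eps r q.2) with hF
  -- step 1 : the inversion set is F
  have hset : {α | α ∈ posRootsC r ∧ -(sact μ σ α) ∈ posRootsC r} = (F : Set (Fin r → ℤ)) := by
    ext α
    simp only [Set.mem_setOf_eq, Finset.coe_union, Set.mem_union, Finset.mem_coe,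
      Finset.mem_image, Finset.mem_filter, Finset.mem_univ, true_and, hF, hF1, hF2]
    constructor
    · rintro ⟨⟨i, j, hij, h | h⟩ | ⟨i, h⟩, hneg⟩
      · -- α = ε_i - ε_j : impossible
        exfalso
        subst h
        have hij' : σ i ≠ σ j := fun h' => hij.ne (σ.injective h')
        rcases hμ (σ i) with ha | ha <;> rcases hμ (σ j) with hb | hb
        · rw [ns11 ha hb] at hneg
          have := (mem_sub_iff hij'.symm).mp hneg
          have hi' : (i : ℕ) < p := by
            have := G1 hσ ha; rwa [Equiv.symm_apply_apply] at this
          have hj' : (j : ℕ) < p := by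
            have := G1 hσ hb; rwa [Equiv.symm_apply_apply] at this
          exact absurd ((H3 hμ hσ hi' hj' hij).trans this) (lt_irrefl _)
        · rw [ns1m ha hb] at hneg
          exact not_mem_neg (add_nonneg' _ _) hneg
        · have hi' : p ≤ (i : ℕ) := by
            have := G2 hμ hσ ha; rwa [Equiv.symm_apply_apply] at this
          have hj' : (j : ℕ) < p := by
            have := G1 hσ hb; rwa [Equiv.symm_apply_apply] at this
          have := Fin.lt_def.mp hij
          omega
        · rw [nsmm ha hb] at hneg
          have := (mem_sub_iff hij').mp hneg
          have hi' : p ≤ (i : ℕ) := by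
            have := G2 hμ hσ ha; rwa [Equiv.symm_apply_apply] at this
          exact absurd ((H4 hμ hσ hi' hij).trans this) (lt_irrefl _)
      · -- α = ε_i + ε_j
        subst h
        have hij' : σ i ≠ σ j := fun h' => hij.ne (σ.injective h')
        rcases hμ (σ i) with ha | ha <;> rcases hμ (σ j) with hb | hb
        · exfalso
          rw [na11 ha hb] at hneg
          exact not_mem_neg (add_nonneg' _ _) hneg
        · rw [na1m ha hb] at hneg
          have hlt := (mem_sub_iff hij'.symm).mp hneg
          have hi' : (i : ℕ) < p := by
            have := G1 hσ ha; rwa [Equiv.symm_apply_apply] at this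
          have hj' : p ≤ (j : ℕ) := by
            have := G2 hμ hσ hb; rwa [Equiv.symm_apply_apply] at this
          exact Or.inr ⟨(i, j), ⟨hij, Or.inr ⟨hi', hj', hlt⟩⟩, rfl⟩
        · exfalso
          have hi' : p ≤ (i : ℕ) := by
            have := G2 hμ hσ ha; rwa [Equiv.symm_apply_apply] at this
          have hj' : (j : ℕ) < p := by
            have := G1 hσ hb; rwa [Equiv.symm_apply_apply] at this
          have := Fin.lt_def.mp hij
          omega
        · have hi' : p ≤ (i : ℕ) := by
            have := G2 hμ hσ ha; rwa [Equiv.symm_apply_apply] at this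
          exact Or.inr ⟨(i, j), ⟨hij, Or.inl hi'⟩, rfl⟩
      · -- α = 2ε_i
        subst h
        rcases hμ (σ i) with ha | ha
        · exfalso
          rw [nt1 ha] at hneg
          exact not_mem_neg (two_nonneg' _) hneg
        · have hi' : p ≤ (i : ℕ) := by
            have := G2 hμ hσ ha; rwa [Equiv.symm_apply_apply] at this
          exact Or.inl ⟨i, hi', rfl⟩
    · rintro (⟨j, hj, rfl⟩ | ⟨q, ⟨hq1, hq2⟩, rfl⟩)
      · have hb := H2 hμ hσ hj
        refine ⟨mem_two _, ?_⟩
        rw [ntm hb]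
        exact mem_two _
      · have hab : σ q.1 ≠ σ q.2 := fun h' => hq1.ne (σ.injective h')
        refine ⟨mem_add hq1.ne, ?_⟩
        rcases hq2 with h | ⟨h1, h2, h3⟩
        · have ha := H2 hμ hσ h
          have hb := H2 hμ hσ (le_trans h (Fin.lt_def.mp hq1).le)
          rw [namm ha hb]
          exact mem_add hab
        · have ha := H1 hμ hσ h1
          have hb := H2 hμ hσ h2
          rw [na1m ha hb]
          exact (mem_sub_iff hab.symm).mpr h3
  -- step 2 : lenC = F.card
  have hlen : lenC μ σ = F.card := by
    rw [lenC, hset, Set.ncard_coe_finset]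
  -- step 3 : card F
  have hpr : p ≤ r := by omega
  have hdisj : Disjoint (F1.image (fun j => 2 • eps r j))
      (F2.image (fun q => eps r q.1 + eps r q.2)) := by
    rw [Finset.disjoint_left]
    rintro x hx1 hx2
    obtain ⟨a, _, rfl⟩ := Finset.mem_image.mp hx1
    obtain ⟨q, hq, h⟩ := Finset.mem_image.mp hx2
    exact two_ne_pair (Finset.mem_filter.mp hq).2.1 h.symm
  have hcard1 : (F1.image (fun j => 2 • eps r j)).card = m := by
    rw [Finset.card_image_of_injective _ inj_two, hF1, card_ge_filter p hpr]
    omega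
  have hcard2 : (F2.image (fun q => eps r q.1 + eps r q.2)).card = F2.card := by
    apply Finset.card_image_of_injOn
    intro q hq q' hq' h
    have h1 := (Finset.mem_filter.mp hq).2.1
    have h2 := (Finset.mem_filter.mp hq').2.1
    obtain ⟨e1, e2⟩ := inj_pair h1 h2 h
    exact Prod.ext e1 e2
  -- step 4 : split F2
  set SA : Finset (Fin r × Fin r) :=
    univ.filter (fun q => q.1 < q.2 ∧ p ≤ (q.1 : ℕ)) with hSA
  set SB : Finset (Fin r × Fin r) :=
    univ.filter (fun q => q.1 < q.2 ∧ (q.1 : ℕ) < p ∧ p ≤ (q.2 : ℕ) ∧ σ q.2 < σ q.1) with hSB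
  have hF2split : F2 = SA ∪ SB := by
    ext q
    simp only [hF2, hSA, hSB, Finset.mem_union, Finset.mem_filter, Finset.mem_univ, true_and]
    constructor
    · rintro ⟨h1, h2 | h2⟩
      · exact Or.inl ⟨h1, h2⟩
      · exact Or.inr ⟨h1, h2⟩
    · rintro (⟨h1, h2⟩ | ⟨h1, h2⟩)
      · exact ⟨h1, Or.inl h2⟩
      · exact ⟨h1, Or.inr h2⟩
  have hdisjAB : Disjoint SA SB := by
    rw [Finset.disjoint_left]
    rintro q hq1 hq2
    have h1 := (Finset.mem_filter.mp hq1).2.2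
    have h2 := (Finset.mem_filter.mp hq2).2.2.1
    omega
  -- step 5 : bijections
  set Sb : Finset (Fin r × Fin r) :=
    univ.filter (fun q => μ q.1 = -1 ∧ μ q.2 = -1 ∧ q.1 < q.2) with hSb
  set Sc : Finset (Fin r × Fin r) :=
    univ.filter (fun q => μ q.1 = -1 ∧ μ q.2 = 1 ∧ q.1 < q.2) with hSc
  have hcardSA : SA.card = Sb.card := by
    apply Finset.card_bij' (fun q _ => (σ q.2, σ q.1)) (fun q _ => (σ.symm q.2, σ.symm q.1))
    · rintro ⟨a, b⟩ hq
      obtain ⟨-, h1, h2⟩ := Finset.mem_filter.mp hq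
      have hb2 : p ≤ (b : ℕ) := le_trans h2 (Fin.lt_def.mp h1).le
      refine Finset.mem_filter.mpr ⟨Finset.mem_univ _, H2 hμ hσ hb2, H2 hμ hσ h2, ?_⟩
      exact H4 hμ hσ h2 h1
    · rintro ⟨a, b⟩ hq
      obtain ⟨-, h1, h2, h3⟩ := Finset.mem_filter.mp hq
      refine Finset.mem_filter.mpr ⟨Finset.mem_univ _, ?_, ?_⟩
      · exact G4 hμ hσ h1 h2 h3
      · exact G2 hμ hσ h2
    · rintro ⟨a, b⟩ _
      simp
    · rintro ⟨a, b⟩ _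
      simp
  have hcardSB : SB.card = Sc.card := by
    apply Finset.card_bij' (fun q _ => (σ q.2, σ q.1)) (fun q _ => (σ.symm q.2, σ.symm q.1))
    · rintro ⟨a, b⟩ hq
      obtain ⟨-, h1, h2, h3, h4⟩ := Finset.mem_filter.mp hq
      exact Finset.mem_filter.mpr ⟨Finset.mem_univ _, H2 hμ hσ h3, H1 hμ hσ h2, h4⟩
    · rintro ⟨a, b⟩ hq
      obtain ⟨-, h1, h2, h3⟩ := Finset.mem_filter.mp hq
      have g1 : (σ.symm b : ℕ) < p := G1 hσ h2
      have g2 : p ≤ (σ.symm a : ℕ) := G2 hμ hσ h1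
      refine Finset.mem_filter.mpr ⟨Finset.mem_univ _, ?_, g1, g2, ?_⟩
      · show σ.symm b < σ.symm a
        exact Fin.lt_def.mpr (by omega)
      · show σ (σ.symm a) < σ (σ.symm b)
        simpa using h3
    · rintro ⟨a, b⟩ _
      simp
    · rintro ⟨a, b⟩ _
      simp
  -- step 6 : the right-hand side
  have hrhs : ∑ i : Fin r, (if μ i = -1 then r - (i : ℕ) else 0)
      = m + (Sb.card + Sc.card) := by
    have key : ∀ i : Fin r, (if μ i = -1 then r - (i : ℕ) else 0)
        = (if μ i = -1 then 1 else 0)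
          + ((univ.filter fun b : Fin r => μ i = -1 ∧ μ b = -1 ∧ i < b).card
          + (univ.filter fun b : Fin r => μ i = -1 ∧ μ b = 1 ∧ i < b).card) := by
      intro i
      rcases hμ i with hi | hi
      · have h1 : (1 : ℤ) ≠ -1 := by norm_num
        simp only [hi, h1, if_false]
        rw [Finset.filter_false_of_mem, Finset.filter_false_of_mem] <;>
          simp [hi] <;> omega
      · rw [if_pos hi, if_pos hi]
        have e1 : (univ.filter fun b : Fin r => μ i = -1 ∧ μ b = -1 ∧ i < b)
            = univ.filter fun b : Fin r => μ b = -1 ∧ i < b := by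
          apply Finset.filter_congr
          intro b _
          simp [hi]
        have e2 : (univ.filter fun b : Fin r => μ i = -1 ∧ μ b = 1 ∧ i < b)
            = univ.filter fun b : Fin r => μ b = 1 ∧ i < b := by
          apply Finset.filter_congr
          intro b _
          simp [hi]
        rw [e1, e2]
        have hsplit : (univ.filter fun b : Fin r => μ b = -1 ∧ i < b)
              ∪ (univ.filter fun b : Fin r => μ b = 1 ∧ i < b)
            = univ.filter fun b : Fin r => i < b := by
          rw [← Finset.filter_or]
          apply Finset.filter_congr
          intro b _
          rcases hμ b with hb | hb <;> simp [hb]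
        have hdisj' : Disjoint (univ.filter fun b : Fin r => μ b = -1 ∧ i < b)
            (univ.filter fun b : Fin r => μ b = 1 ∧ i < b) := by
          rw [Finset.disjoint_left]
          rintro b hb1 hb2
          have h1 := (Finset.mem_filter.mp hb1).2.1
          have h2 := (Finset.mem_filter.mp hb2).2.1
          rw [h2] at h1
          norm_num at h1
        have hcu := Finset.card_union_of_disjoint hdisj'
        rw [hsplit, card_gt_filter] at hcu
        have hir : (i : ℕ) < r := i.isLt
        omega
    rw [Finset.sum_congr rfl (fun i _ => key i), Finset.sum_add_distrib,
      Finset.sum_add_distrib]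
    congr 1
    · rw [hm]
      exact (Finset.card_filter _ _).symm
    · congr 1
      · rw [hSb, card_pair_filter]
      · rw [hSc, card_pair_filter]
  -- final assembly
  rw [hlen, hF, Finset.card_union_of_disjoint hdisj, hcard1, hcard2, hF2split,
    Finset.card_union_of_disjoint hdisjAB, hcardSA, hcardSB, hrhs]
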